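/- Let B_in ⊂ ℝ^d be a ball of radius r centered at x₀ and χ(x) = |x−x₀|² − r². For any polynomial v of degree ≤ k−2, if the polynomial w = χ v satisfies ∑_{i,j} A_{ij} ∂_i ∂_j w = 0 identically on B_in for some constant symmetric positive definite matrix A, then v = 0. -/

import Mathlib

open Metric MvPolynomial

lemma aux_zero_of_eval_sets : ∀ (n : ℕ) (p : MvPolynomial (Fin n) ℝ) (S : Fin n → Set ℝ),
    (∀ i, (S i).Infinite) → (∀ x : Fin n → ℝ, (∀ i, x i ∈ S i) → eval x p = 0) → p = 0 := by
  intro n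
  induction n with
  | zero =>
    intro p S _ h
    have h0 : eval (fun i => (0:ℝ)) p = 0 := h _ (fun i => i.elim0)
    rw [eq_C_of_isEmpty p] at h0 ⊢
    simpa using h0
  | succ n ih =>
    intro p S hS h
    have hq : ∀ m : ℕ, (finSuccEquiv ℝ n p).coeff m = 0 := by
      intro m
      apply ih _ (fun i => S i.succ) (fun i => hS i.succ)
      intro x hx
      have hQ : (Polynomial.map (eval x) (finSuccEquiv ℝ n p)) = 0 := by
        apply Polynomial.eq_zero_of_infinite_isRoot
        apply Set.Infinite.mono _ (hS 0)
        intro y hy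
        simp only [Set.mem_setOf_eq, Polynomial.IsRoot.def]
        rw [← eval_eq_eval_mv_eval']
        apply h
        intro i
        refine Fin.cases ?_ ?_ i
        · simpa using hy
        · intro j; simpa using hx j
      have := congrArg (fun Q => Q.coeff m) hQ
      simpa [Polynomial.coeff_map] using this
    have : finSuccEquiv ℝ n p = 0 := Polynomial.ext (by simpa using hq)
    exact (EmbeddingLike.map_eq_zero_iff (f := finSuccEquiv ℝ n)).mp this

variable {d : ℕ}

noncomputable def wgt (μ : Fin d → ℝ) (α : Fin d →₀ ℕ) : ℝ :=
  ∏ i, (Nat.factorial (α i) : ℝ) * μ i ^ (α i)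

lemma wgt_pos {μ : Fin d → ℝ} (hμ : ∀ i, 0 < μ i) (α : Fin d →₀ ℕ) : 0 < wgt μ α := by
  apply Finset.prod_pos
  intro i _
  exact mul_pos (Nat.cast_pos.mpr (Nat.factorial_pos _)) (pow_pos (hμ i) _)

lemma wgt_add_single (μ : Fin d → ℝ) (β : Fin d →₀ ℕ) (i : Fin d) :
    wgt μ (β + Finsupp.single i 1) = μ i * ((β i : ℝ) + 1) * wgt μ β := by
  unfold wgt
  rw [← Finset.mul_prod_erase Finset.univ _ (Finset.mem_univ i),
      ← Finset.mul_prod_erase Finset.univ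
        (fun j => (Nat.factorial (β j) : ℝ) * μ j ^ (β j)) (Finset.mem_univ i)]
  have h1 : ∀ j ∈ Finset.univ.erase i,
      (Nat.factorial ((β + Finsupp.single i 1 : Fin d →₀ ℕ) j) : ℝ) * μ j ^ ((β + Finsupp.single i 1 : Fin d →₀ ℕ) j)
        = (Nat.factorial (β j) : ℝ) * μ j ^ (β j) := by
    intro j hj
    have hne : j ≠ i := (Finset.mem_erase.mp hj).1
    simp [Finsupp.add_apply, Finsupp.single_apply, Ne.symm hne]
  rw [Finset.prod_congr rfl h1]
  have h2 : (β + Finsupp.single i 1 : Fin d →₀ ℕ) i = β i + 1 := by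
    simp
  rw [h2, Nat.factorial_succ, pow_succ]
  push_cast
  ring

noncomputable def FP (μ : Fin d → ℝ) (f g : MvPolynomial (Fin d) ℝ) : ℝ :=
  ∑ α ∈ f.support, wgt μ α * coeff α f * coeff α g

lemma FP_eq_sum_subset (μ : Fin d → ℝ) {f : MvPolynomial (Fin d) ℝ} {T : Finset (Fin d →₀ ℕ)}
    (hT : f.support ⊆ T) (g : MvPolynomial (Fin d) ℝ) :
    FP μ f g = ∑ α ∈ T, wgt μ α * coeff α f * coeff α g := by
  apply Finset.sum_subset hT
  intro x _ hx
  rw [notMem_support_iff.mp hx]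
  ring

lemma FP_zero_left (μ : Fin d → ℝ) (g : MvPolynomial (Fin d) ℝ) : FP μ 0 g = 0 := by
  simp [FP]

lemma FP_zero_right (μ : Fin d → ℝ) (f : MvPolynomial (Fin d) ℝ) : FP μ f 0 = 0 := by
  simp [FP]

lemma FP_add_left (μ : Fin d → ℝ) (f g h : MvPolynomial (Fin d) ℝ) :
    FP μ (f + g) h = FP μ f h + FP μ g h := by
  rw [FP_eq_sum_subset μ (T := f.support ∪ g.support) support_add h,
      FP_eq_sum_subset μ (T := f.support ∪ g.support) Finset.subset_union_left h,
      FP_eq_sum_subset μ (T := f.support ∪ g.support) Finset.subset_union_right h,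
      ← Finset.sum_add_distrib]
  apply Finset.sum_congr rfl
  intro α _
  rw [coeff_add]
  ring

lemma FP_add_right (μ : Fin d → ℝ) (f g h : MvPolynomial (Fin d) ℝ) :
    FP μ f (g + h) = FP μ f g + FP μ f h := by
  unfold FP
  rw [← Finset.sum_add_distrib]
  apply Finset.sum_congr rfl
  intro α _
  rw [coeff_add]
  ring

lemma FP_sum_left (μ : Fin d → ℝ) {ι : Type*} (s : Finset ι) (f : ι → MvPolynomial (Fin d) ℝ)
    (g : MvPolynomial (Fin d) ℝ) : FP μ (∑ i ∈ s, f i) g = ∑ i ∈ s, FP μ (f i) g := by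
  induction s using Finset.cons_induction with
  | empty => simp [FP_zero_left]
  | cons a s has ih => rw [Finset.sum_cons, Finset.sum_cons, FP_add_left, ih]

lemma FP_sum_right (μ : Fin d → ℝ) {ι : Type*} (s : Finset ι) (f : MvPolynomial (Fin d) ℝ)
    (g : ι → MvPolynomial (Fin d) ℝ) : FP μ f (∑ i ∈ s, g i) = ∑ i ∈ s, FP μ f (g i) := by
  induction s using Finset.cons_induction with
  | empty => simp [FP_zero_right]
  | cons a s has ih => rw [Finset.sum_cons, Finset.sum_cons, FP_add_right, ih]

lemma FP_C_mul_right (μ : Fin d → ℝ) (a : ℝ) (f g : MvPolynomial (Fin d) ℝ) :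
    FP μ f (C a * g) = a * FP μ f g := by
  unfold FP
  rw [Finset.mul_sum]
  apply Finset.sum_congr rfl
  intro α _
  rw [coeff_C_mul]
  ring

lemma FP_monomial_left (μ : Fin d → ℝ) (β : Fin d →₀ ℕ) (b : ℝ) (g : MvPolynomial (Fin d) ℝ) :
    FP μ (monomial β b) g = wgt μ β * b * coeff β g := by
  unfold FP
  rw [support_monomial]
  split_ifs with hb
  · simp [hb]
  · rw [Finset.sum_singleton, coeff_monomial, if_pos rfl]

lemma coeff_pderiv_aux (i : Fin d) (β : Fin d →₀ ℕ) (g : MvPolynomial (Fin d) ℝ) :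
    coeff β (pderiv i g) = ((β i : ℝ) + 1) * coeff (β + Finsupp.single i 1) g := by
  induction g using MvPolynomial.induction_on' with
  | add p q hp hq => rw [map_add, coeff_add, coeff_add, hp, hq]; ring
  | monomial γ c =>
    rw [pderiv_monomial, coeff_monomial, coeff_monomial]
    by_cases hγ : γ = β + Finsupp.single i 1
    · subst hγ
      rw [if_pos rfl, if_pos (add_tsub_cancel_right _ _)]
      have : (β + Finsupp.single i 1 : Fin d →₀ ℕ) i = β i + 1 := by
        simp
      rw [this]
      push_cast
      ring
    · rw [if_neg hγ, mul_zero]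
      by_cases h0 : γ i = 0
      · by_cases he : γ - Finsupp.single i 1 = β
        · rw [if_pos he]
          simp [h0]
        · rw [if_neg he]
      · have he : γ - Finsupp.single i 1 ≠ β := by
          intro he
          apply hγ
          rw [← he]
          ext j
          simp only [Finsupp.add_apply, Finsupp.tsub_apply, Finsupp.single_apply]
          by_cases hj : i = j
          · subst hj
            simp only [eq_self_iff_true, if_true]
            omega
          · simp [hj]
        rw [if_neg he]

lemma FP_X_mul (μ : Fin d → ℝ) (i : Fin d) (f g : MvPolynomial (Fin d) ℝ) :
    FP μ (X i * f) g = μ i * FP μ f (pderiv i g) := by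
  induction f using MvPolynomial.induction_on' with
  | add p q hp hq => rw [mul_add, FP_add_left, FP_add_left, hp, hq]; ring
  | monomial β b =>
    have : X i * monomial β b = monomial (β + Finsupp.single i 1) b := by
      rw [X, monomial_mul, one_mul, add_comm]
    rw [this, FP_monomial_left, FP_monomial_left, coeff_pderiv_aux, wgt_add_single]
    ring

lemma FP_pos {μ : Fin d → ℝ} (hμ : ∀ i, 0 < μ i) {f : MvPolynomial (Fin d) ℝ} (hf : f ≠ 0) :
    0 < FP μ f f := by
  apply Finset.sum_pos'
  · intro α _
    rw [mul_assoc]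
    exact mul_nonneg (wgt_pos hμ α).le (mul_self_nonneg _)
  · obtain ⟨α, hα⟩ := Finset.nonempty_iff_ne_empty.mpr (fun h => hf (support_eq_empty.mp h))
    refine ⟨α, hα, ?_⟩
    rw [mul_assoc]
    exact mul_pos (wgt_pos hμ α) (mul_self_pos.mpr (mem_support_iff.mp hα))

lemma FP_orth (μ : Fin d → ℝ) {f g : MvPolynomial (Fin d) ℝ} {m : ℕ}
    (hf : f.IsHomogeneous m) (hg : g.totalDegree < m) : FP μ f g = 0 := by
  apply Finset.sum_eq_zero
  intro α hα
  have hdeg : Finsupp.weight 1 α = m := hf (mem_support_iff.mp hα)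
  have : coeff α g = 0 := by
    apply coeff_eq_zero_of_totalDegree_lt
    rw [show (∑ i ∈ α.support, α i) = Finsupp.degree α from rfl, Finsupp.degree_eq_weight_one]
    simpa using hdeg.symm ▸ hg
  rw [this, mul_zero]

lemma FP_q_mul (μ : Fin d → ℝ) (f g : MvPolynomial (Fin d) ℝ) :
    FP μ ((∑ i, (X i : MvPolynomial (Fin d) ℝ) ^ 2) * f) g
      = FP μ f (∑ i, C (μ i ^ 2) * pderiv i (pderiv i g)) := by
  rw [Finset.sum_mul, FP_sum_left, FP_sum_right]
  apply Finset.sum_congr rfl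
  intro i _
  rw [pow_two, mul_assoc, FP_X_mul, FP_X_mul, FP_C_mul_right]
  ring

variable {d : ℕ}

noncomputable def sbst (U : Matrix (Fin d) (Fin d) ℝ) :
    MvPolynomial (Fin d) ℝ →ₐ[ℝ] MvPolynomial (Fin d) ℝ :=
  aeval (fun i => ∑ j, C (U i j) * X j)

lemma sbst_X (U : Matrix (Fin d) (Fin d) ℝ) (i : Fin d) :
    sbst U (X i) = ∑ j, C (U i j) * X j := aeval_X _ _

lemma sbst_C (U : Matrix (Fin d) (Fin d) ℝ) (a : ℝ) : sbst U (C a) = C a := by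
  simp [sbst, algebraMap_eq]

lemma pderiv_sbst_X (U : Matrix (Fin d) (Fin d) ℝ) (k n : Fin d) :
    pderiv k (sbst U (X n)) = C (U n k) := by
  rw [sbst_X, map_sum, Finset.sum_eq_single k]
  · rw [pderiv_C_mul, pderiv_X, Pi.single_eq_same, mul_one]
  · intro j _ hj
    rw [pderiv_C_mul, pderiv_X, Pi.single_eq_of_ne hj, mul_zero]
  · intro h; exact absurd (Finset.mem_univ k) h

lemma pderiv_sbst (U : Matrix (Fin d) (Fin d) ℝ) (k : Fin d) (g : MvPolynomial (Fin d) ℝ) :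
    pderiv k (sbst U g) = ∑ l, C (U l k) * sbst U (pderiv l g) := by
  induction g using MvPolynomial.induction_on with
  | C a => simp [sbst_C]
  | add p q hp hq =>
    rw [map_add, map_add, hp, hq, ← Finset.sum_add_distrib]
    exact Finset.sum_congr rfl fun l _ => by rw [map_add, map_add, mul_add]
  | mul_X p n ih =>
    rw [map_mul, pderiv_mul, ih, pderiv_sbst_X]
    have : ∀ l : Fin d, C (U l k) * sbst U (pderiv l (p * X n))
        = (C (U l k) * sbst U (pderiv l p)) * sbst U (X n)
          + C (U l k) * (sbst U p * sbst U (pderiv l (X n))) := by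
      intro l
      rw [pderiv_mul, map_add, map_mul, map_mul, mul_add]
      ring
    rw [Finset.sum_congr rfl (fun l _ => this l), Finset.sum_add_distrib, ← Finset.sum_mul]
    congr 1
    rw [Finset.sum_eq_single n]
    · rw [pderiv_X, Pi.single_eq_same]
      simp
      ring
    · intro j _ hj
      rw [pderiv_X, Pi.single_eq_of_ne (Ne.symm hj)]
      simp
    · intro h; exact absurd (Finset.mem_univ n) h

lemma sbst_conj (U A : Matrix (Fin d) (Fin d) ℝ) (lam : Fin d → ℝ)
    (hAU : ∀ l m, A l m = ∑ t, U l t * lam t * U m t)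
    (hAsym : ∀ l m, A l m = A m l) (g : MvPolynomial (Fin d) ℝ) :
    ∑ t, C (lam t) * pderiv t (pderiv t (sbst U g))
      = sbst U (∑ i, ∑ j, C (A i j) * pderiv i (pderiv j g)) := by
  have step1 : ∀ t, C (lam t) * pderiv t (pderiv t (sbst U g))
      = ∑ l, ∑ m, C (U l t * lam t * U m t) * sbst U (pderiv m (pderiv l g)) := by
    intro t
    rw [pderiv_sbst, map_sum, Finset.mul_sum]
    refine Finset.sum_congr rfl fun l _ => ?_
    rw [pderiv_C_mul, pderiv_sbst, Finset.mul_sum, Finset.mul_sum]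
    refine Finset.sum_congr rfl fun m _ => ?_
    rw [map_mul, map_mul]
    ring
  have step2 : ∑ t, C (lam t) * pderiv t (pderiv t (sbst U g))
      = ∑ l, ∑ m, C (A l m) * sbst U (pderiv m (pderiv l g)) := by
    rw [Finset.sum_congr rfl (fun t _ => step1 t), Finset.sum_comm]
    refine Finset.sum_congr rfl fun l _ => ?_
    rw [Finset.sum_comm]
    refine Finset.sum_congr rfl fun m _ => ?_
    rw [← Finset.sum_mul, ← map_sum, ← hAU l m]
  rw [step2, map_sum, Finset.sum_comm]
  refine Finset.sum_congr rfl fun m _ => ?_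
  rw [map_sum]
  refine Finset.sum_congr rfl fun l _ => ?_
  rw [map_mul, sbst_C, hAsym l m]

lemma sbst_sbst (U W : Matrix (Fin d) (Fin d) ℝ) (hUW : U * W = 1) (g : MvPolynomial (Fin d) ℝ) :
    sbst W (sbst U g) = g := by
  have key : (sbst W).comp (sbst U) = AlgHom.id ℝ (MvPolynomial (Fin d) ℝ) := by
    apply MvPolynomial.algHom_ext
    intro i
    simp only [AlgHom.comp_apply, AlgHom.id_apply, sbst_X, map_sum]
    have h1 : ∀ j, sbst W (C (U i j) * X j) = ∑ k, C (U i j * W j k) * X k := by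
      intro j
      rw [map_mul, sbst_C, sbst_X, Finset.mul_sum]
      refine Finset.sum_congr rfl fun k _ => ?_
      rw [map_mul]
      ring
    rw [Finset.sum_congr rfl (fun j _ => h1 j), Finset.sum_comm]
    have h2 : ∀ k, ∑ j, C (U i j * W j k) * X k = C ((U * W) i k) * X k := by
      intro k
      rw [← Finset.sum_mul, ← map_sum, Matrix.mul_apply]
    rw [Finset.sum_congr rfl (fun k _ => h2 k), hUW]
    rw [Finset.sum_eq_single i]
    · rw [Matrix.one_apply_eq, map_one, one_mul]
    · intro k _ hk
      rw [Matrix.one_apply_ne (Ne.symm hk), map_zero, zero_mul]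
    · intro h; exact absurd (Finset.mem_univ i) h
  calc sbst W (sbst U g) = ((sbst W).comp (sbst U)) g := rfl
    _ = g := by rw [key]; rfl

lemma sbst_injective (U W : Matrix (Fin d) (Fin d) ℝ) (hUW : U * W = 1)
    {g : MvPolynomial (Fin d) ℝ} (h : sbst U g = 0) : g = 0 := by
  have := sbst_sbst U W hUW g
  rw [h, map_zero] at this
  exact this.symm

lemma sbst_isHomogeneous (U : Matrix (Fin d) (Fin d) ℝ) {g : MvPolynomial (Fin d) ℝ} {n : ℕ}
    (h : g.IsHomogeneous n) : (sbst U g).IsHomogeneous n := by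
  have hlin : ∀ i : Fin d, (∑ j, C (U i j) * X j : MvPolynomial (Fin d) ℝ).IsHomogeneous 1 :=
    fun i => IsHomogeneous.sum _ _ _ fun j _ => isHomogeneous_C_mul_X _ _
  have h2 := h.aeval (fun i => ∑ j, C (U i j) * X j) hlin
  simpa [sbst] using h2

lemma sbst_totalDegree (U : Matrix (Fin d) (Fin d) ℝ) (g : MvPolynomial (Fin d) ℝ) :
    (sbst U g).totalDegree ≤ g.totalDegree := by
  conv_lhs => rw [← support_sum_monomial_coeff g]
  rw [map_sum]
  apply totalDegree_finsetSum_le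
  intro α hα
  have : sbst U (monomial α (coeff α g))
      = C (coeff α g) * α.prod fun i k => (∑ j, C (U i j) * X j) ^ k := by
    rw [show sbst U (monomial α (coeff α g)) = aeval _ (monomial α (coeff α g)) from rfl,
      aeval_monomial, algebraMap_eq]
  rw [this]
  refine le_trans (totalDegree_mul _ _) ?_
  rw [totalDegree_C, zero_add]
  refine le_trans ?_ (le_totalDegree hα)
  refine le_trans (totalDegree_finset_prod _ _) ?_
  have hbound : ∀ i ∈ α.support,
      ((∑ j, C (U i j) * X j : MvPolynomial (Fin d) ℝ) ^ (α i)).totalDegree ≤ α i := by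
    intro i _
    refine le_trans (totalDegree_pow _ _) ?_
    have h1 : (∑ j, C (U i j) * X j : MvPolynomial (Fin d) ℝ).totalDegree ≤ 1 :=
      totalDegree_finsetSum_le fun j _ => le_trans (totalDegree_mul _ _) (by simp)
    calc α i * (∑ j, C (U i j) * X j : MvPolynomial (Fin d) ℝ).totalDegree
        ≤ α i * 1 := Nat.mul_le_mul_left _ h1
      _ = α i := Nat.mul_one _
  refine le_trans (Finset.sum_le_sum hbound) ?_
  rw [Finsupp.sum]

lemma sbst_q (U : Matrix (Fin d) (Fin d) ℝ)
    (hU : ∀ j k, (∑ i, U i j * U i k) = if j = k then (1:ℝ) else 0) :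
    sbst U (∑ i, (X i : MvPolynomial (Fin d) ℝ) ^ 2)
      = ∑ i, (X i : MvPolynomial (Fin d) ℝ) ^ 2 := by
  rw [map_sum]
  have h1 : ∀ i, sbst U ((X i : MvPolynomial (Fin d) ℝ) ^ 2)
      = ∑ j, ∑ k, C (U i j * U i k) * (X j * X k) := by
    intro i
    rw [map_pow, sbst_X, pow_two, Finset.sum_mul_sum]
    refine Finset.sum_congr rfl fun j _ => Finset.sum_congr rfl fun k _ => ?_
    rw [map_mul]
    ring
  rw [Finset.sum_congr rfl (fun i _ => h1 i), Finset.sum_comm]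
  refine Finset.sum_congr rfl fun j _ => ?_
  rw [Finset.sum_comm]
  have h2 : ∀ k, ∑ i, C (U i j * U i k) * (X j * X k)
      = C (if j = k then (1:ℝ) else 0) * (X j * X k) := by
    intro k
    rw [← Finset.sum_mul, ← map_sum, hU j k]
  rw [Finset.sum_congr rfl (fun k _ => h2 k), Finset.sum_eq_single j]
  · rw [if_pos rfl, map_one, one_mul, pow_two]
  · intro k _ hk
    rw [if_neg (Ne.symm hk), map_zero, zero_mul]
  · intro h; exact absurd (Finset.mem_univ j) h


/-- kernel triviality in Lemma 2: if w = χv (with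
χ(x) = |x−x₀|² − r² vanishing on ∂B_in) satisfies ∑ A_{ij}∂_i∂_j w = 0
identically on the ball B_in for a constant symmetric positive definite A,
then the polynomial v is zero. -/
theorem stmt16 (d k : ℕ) (hd : 0 < d) (hk : 2 ≤ k)
    (x₀ : EuclideanSpace ℝ (Fin d)) (r : ℝ) (hr : 0 < r)
    (A : Matrix (Fin d) (Fin d) ℝ) (hA : A.PosDef)
    (v : MvPolynomial (Fin d) ℝ) (hv : v.totalDegree ≤ k - 2)
    (hw : ∀ x ∈ Metric.ball x₀ r,
      MvPolynomial.eval (fun i => x i)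
        (∑ i, ∑ j, MvPolynomial.C (A i j) *
          MvPolynomial.pderiv i (MvPolynomial.pderiv j
            (((∑ i, (MvPolynomial.X i - MvPolynomial.C (x₀ i)) ^ 2)
                - MvPolynomial.C (r ^ 2)) * v))) = 0) :
    v = 0 := by
  classical
  by_contra hv0
  set q : MvPolynomial (Fin d) ℝ := ∑ i, X i ^ 2 with hq_def
  set χ : MvPolynomial (Fin d) ℝ :=
    (∑ i, (X i - C (x₀ i)) ^ 2) - C (r ^ 2) with hχ_def
  -- Step A: the polynomial identity
  have hDAv0 : (∑ i, ∑ j, C (A i j) * pderiv i (pderiv j (χ * v))) = 0 := by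
    set δ : ℝ := r / (d + 1) with hδ_def
    have hδ : 0 < δ := by positivity
    apply aux_zero_of_eval_sets d _ (fun i => Set.Ioo (x₀ i - δ) (x₀ i + δ))
    · intro i
      exact Set.Ioo_infinite (by linarith)
    · intro x hx
      have hx' : ((WithLp.equiv 2 (Fin d → ℝ)).symm x) ∈ Metric.ball x₀ r := by
        rw [Metric.mem_ball, EuclideanSpace.dist_eq]
        rw [Real.sqrt_lt' hr]
        have hterm : ∀ i : Fin d,
            dist ((WithLp.equiv 2 (Fin d → ℝ)).symm x i) (x₀ i) ^ 2 < δ ^ 2 := by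
          intro i
          have h1 : x i ∈ Set.Ioo (x₀ i - δ) (x₀ i + δ) := hx i
          have h2 : |x i - x₀ i| < δ := by
            rw [abs_lt]
            constructor <;> [linarith [h1.1]; linarith [h1.2]]
          have h3 : dist ((WithLp.equiv 2 (Fin d → ℝ)).symm x i) (x₀ i) = |x i - x₀ i| := by
            exact Real.dist_eq _ _
          rw [h3]
          exact pow_lt_pow_left₀ h2 (abs_nonneg _) (by norm_num)
        have hsum : ∑ i : Fin d, dist ((WithLp.equiv 2 (Fin d → ℝ)).symm x i) (x₀ i) ^ 2
            < ∑ _i : Fin d, δ ^ 2 :=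
          Finset.sum_lt_sum_of_nonempty
            (Finset.univ_nonempty_iff.mpr ⟨⟨0, hd⟩⟩) (fun i _ => hterm i)
        rw [Finset.sum_const, Finset.card_univ, Fintype.card_fin, nsmul_eq_mul] at hsum
        have hfin : (d : ℝ) * δ ^ 2 < r ^ 2 := by
          have hdlt : (d : ℝ) < ((d : ℝ) + 1) ^ 2 := by nlinarith [Nat.cast_nonneg (α := ℝ) d]
          have hr2 : (0:ℝ) < r ^ 2 := by positivity
          have h2 : (0:ℝ) < ((d:ℝ) + 1) ^ 2 := by positivity
          rw [hδ_def, div_pow, mul_div_assoc']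
          rw [div_lt_iff₀ h2]
          nlinarith [mul_lt_mul_of_pos_left hdlt hr2]
        linarith
      have := hw _ hx'
      convert this using 2
      rfl
  -- Step B: spectral decomposition
  have hherm : A.IsHermitian := hA.1
  set U : Matrix (Fin d) (Fin d) ℝ :=
    (Matrix.IsHermitian.eigenvectorUnitary hherm : Matrix (Fin d) (Fin d) ℝ) with hU_def
  set lam : Fin d → ℝ := hherm.eigenvalues with hlam_def
  have hlam : ∀ i, 0 < lam i := fun i => hA.eigenvalues_pos i
  set μ : Fin d → ℝ := fun i => Real.sqrt (lam i) with hμ_def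
  have hμ : ∀ i, 0 < μ i := fun i => Real.sqrt_pos.mpr (hlam i)
  have hμsq : ∀ i, μ i ^ 2 = lam i := fun i => Real.sq_sqrt (hlam i).le
  have hAU : ∀ l m, A l m = ∑ t, U l t * lam t * U m t := by
    intro l m
    conv_lhs => rw [hherm.spectral_theorem, Unitary.conjStarAlgAut_apply]
    rw [Matrix.mul_apply]
    refine Finset.sum_congr rfl fun t _ => ?_
    rw [Matrix.mul_diagonal]
    simp [hU_def, hlam_def, Matrix.star_apply, mul_assoc]
  have hAsym : ∀ l m, A l m = A m l := by
    intro l m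
    have h1 := congrFun (congrFun hherm m) l
    rw [Matrix.conjTranspose_apply] at h1
    simpa using h1
  have hU1 : ∀ j t, (∑ i, U i j * U i t) = if j = t then (1 : ℝ) else 0 := by
    intro j t
    have h1 : star U * U = 1 :=
      Matrix.mem_unitaryGroup_iff'.mp (Matrix.IsHermitian.eigenvectorUnitary hherm).2
    have h2 := congrFun (congrFun h1 j) t
    rw [Matrix.mul_apply] at h2
    simp only [Matrix.star_apply, star_trivial] at h2
    rw [h2, Matrix.one_apply]
  have hUW : U * U.transpose = 1 := by
    have h1 : U * star U = 1 :=
      Matrix.mem_unitaryGroup_iff.mp (Matrix.IsHermitian.eigenvectorUnitary hherm).2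
    rw [Matrix.star_eq_conjTranspose] at h1
    rw [show U.transpose = U.conjTranspose by ext i j; simp [Matrix.conjTranspose_apply]]
    exact h1
  -- Step C: decomposition of v and χ
  set s := v.totalDegree with hs_def
  set p := homogeneousComponent s v with hp_def
  have hphom : p.IsHomogeneous s := homogeneousComponent_isHomogeneous s v
  have hp0 : p ≠ 0 := by
    obtain ⟨α, hmem, hval⟩ := Finset.exists_mem_eq_sup v.support
      (Finset.nonempty_iff_ne_empty.mpr (fun h => hv0 (support_eq_empty.mp h))) (fun α => α.sum fun _ e => e)
    intro hp
    have hc : coeff α p = coeff α v := by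
      rw [hp_def, coeff_homogeneousComponent,
        if_pos (by rw [hs_def, MvPolynomial.totalDegree, hval]; rfl)]
    rw [hp] at hc
    exact (mem_support_iff.mp hmem) (by rw [← hc, coeff_zero])
  set w : MvPolynomial (Fin d) ℝ := ∑ i ∈ Finset.range s, homogeneousComponent i v with hw_def
  have hvw : w + p = v := by
    rw [hw_def, hp_def, ← Finset.sum_range_succ]
    exact sum_homogeneousComponent v
  have hwdeg : w.totalDegree < s ∨ w = 0 := by
    rcases Nat.eq_zero_or_pos s with hs0 | hs0
    · right; rw [hw_def, hs0]; simp
    · left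
      apply Nat.lt_of_le_of_lt (m := s - 1) _ (by omega)
      apply totalDegree_finsetSum_le
      intro i hi
      have := Finset.mem_range.mp hi
      exact le_trans (homogeneousComponent_isHomogeneous i v).totalDegree_le (by omega)
  set ell : MvPolynomial (Fin d) ℝ :=
    (∑ i, ((C (x₀ i)) ^ 2 - C (2 * x₀ i) * X i)) - C (r ^ 2) with hell_def
  have hχq : χ = q + ell := by
    rw [hχ_def, hq_def, hell_def]
    have h1 : ∀ i : Fin d, (X i - C (x₀ i)) ^ 2
        = X i ^ 2 + ((C (x₀ i)) ^ 2 - C (2 * x₀ i) * X i) := by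
      intro i
      rw [map_mul, map_ofNat]
      ring
    rw [Finset.sum_congr rfl (fun i _ => h1 i), Finset.sum_add_distrib]
    ring
  have helldeg : ell.totalDegree ≤ 1 := by
    rw [hell_def]
    refine le_trans (totalDegree_sub _ _) ?_
    rw [totalDegree_C, max_eq_left (Nat.zero_le _)]
    apply totalDegree_finsetSum_le
    intro i _
    refine le_trans (totalDegree_sub _ _) ?_
    apply max_le
    · exact le_trans (totalDegree_pow _ _) (by simp [totalDegree_C])
    · exact le_trans (totalDegree_mul _ _)
        (by simp only [totalDegree_C, totalDegree_X]; omega)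
  have hqdeg : q.totalDegree ≤ 2 := by
    rw [hq_def]
    apply totalDegree_finsetSum_le
    intro i _
    exact le_trans (totalDegree_pow _ _) (by simp [totalDegree_X])
  have hχv : χ * v = q * p + (q * w + ell * v) := by
    rw [hχq, ← hvw]
    ring
  have hqhom : q.IsHomogeneous 2 := by
    rw [hq_def]
    exact IsHomogeneous.sum _ _ _ fun i _ => isHomogeneous_X_pow i 2
  have hq0 : q ≠ 0 := by
    intro h
    have h1 := congrArg (eval (fun _ : Fin d => (1:ℝ))) h
    rw [hq_def, map_sum, map_zero] at h1
    simp only [map_pow, eval_X, one_pow] at h1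
    rw [Finset.sum_const, Finset.card_univ, Fintype.card_fin, nsmul_eq_mul, mul_one] at h1
    exact absurd (Nat.cast_eq_zero.mp h1) (Nat.pos_iff_ne_zero.mp hd)
  have hσp0 : sbst U p ≠ 0 := fun h => hp0 (sbst_injective U U.transpose hUW h)
  have hqσp0 : q * sbst U p ≠ 0 := mul_ne_zero hq0 hσp0
  have hqσphom : (q * sbst U p).IsHomogeneous (2 + s) :=
    hqhom.mul (sbst_isHomogeneous U hphom)
  have hzero : FP μ (q * sbst U p) (sbst U (χ * v)) = 0 := by
    rw [hq_def, FP_q_mul]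
    have h1 : (∑ t, C (μ t ^ 2) * pderiv t (pderiv t (sbst U (χ * v))))
        = sbst U (∑ i, ∑ j, C (A i j) * pderiv i (pderiv j (χ * v))) := by
      rw [Finset.sum_congr rfl (fun t (_ : t ∈ Finset.univ) => by rw [hμsq t])]
      exact sbst_conj U A lam hAU hAsym (χ * v)
    rw [h1, hDAv0, map_zero, FP_zero_right]
  have hpos : 0 < FP μ (q * sbst U p) (sbst U (χ * v)) := by
    rw [hχv, map_add, FP_add_right]
    have hfirst : sbst U (q * p) = q * sbst U p := by
      rw [map_mul]
      congr 1
      rw [hq_def]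
      exact sbst_q U hU1
    rw [hfirst]
    have hsecond : FP μ (q * sbst U p) (sbst U (q * w + ell * v)) = 0 := by
      apply FP_orth μ hqσphom
      apply Nat.lt_of_le_of_lt (sbst_totalDegree U _)
      refine Nat.lt_of_le_of_lt (totalDegree_add _ _) ?_
      apply max_lt
      · rcases hwdeg with h | h
        · calc (q * w).totalDegree ≤ q.totalDegree + w.totalDegree := totalDegree_mul _ _
            _ < 2 + s := by omega
        · rw [h, mul_zero, totalDegree_zero]
          omega
      · calc (ell * v).totalDegree ≤ ell.totalDegree + v.totalDegree := totalDegree_mul _ _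
          _ < 2 + s := by omega
    rw [hsecond, add_zero]
    exact FP_pos hμ hqσp0
  rw [hzero] at hpos
  exact lt_irrefl 0 hpos
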